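/- There exists an absolute constant C > 0 such that for every n ≥ 1, every β ≥ C·n^{3/2}, every λ ≥ 1 and every s ≥ 1: ν_β(Q_{2s} ∖ Q_{2s−1}) < (1/2)·ν_β(Q_{2s} ∖ Q_{2s−2}); that is, ν_β(A_s ∩ B_s) < (1/2)·ν_β(A_s). -/

import Mathlib

open MeasureTheory ENNReal

/-- The measure `dν_β(x) = min{1, |x|^{-β}} dx` on `ℝⁿ`. -/
noncomputable def nuMeas (n : ℕ) (β : ℝ) : Measure (EuclideanSpace ℝ (Fin n)) :=
  volume.withDensity fun x => ENNReal.ofReal (min 1 (‖x‖ ^ (-β)))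

/-- The cube `Q_s = [-2^s λ, 2^s λ]ⁿ`. -/
def cubeQ (n : ℕ) (lam : ℝ) (s : ℕ) : Set (EuclideanSpace ℝ (Fin n)) :=
  {x | ∀ i, |x i| ≤ 2 ^ s * lam}

open Set Pointwise Module

lemma cubeQ_measurableSet (n : ℕ) (lam : ℝ) (s : ℕ) : MeasurableSet (cubeQ n lam s) := by
  have h : cubeQ n lam s
      = ⋂ i, (fun x : EuclideanSpace ℝ (Fin n) => x i) ⁻¹' Icc (-(2 ^ s * lam)) (2 ^ s * lam) := by
    ext x; simp [cubeQ, abs_le]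
  have hm : ∀ i, Measurable fun x : EuclideanSpace ℝ (Fin n) => x i := by
    intro i; fun_prop
  rw [h]
  exact MeasurableSet.iInter fun i => (hm i) measurableSet_Icc

lemma cubeQ_subset (n : ℕ) {lam : ℝ} (hlam : 0 ≤ lam) {s t : ℕ} (h : s ≤ t) :
    cubeQ n lam s ⊆ cubeQ n lam t := by
  intro x hx i
  refine (hx i).trans (mul_le_mul_of_nonneg_right ?_ hlam)
  exact pow_le_pow_right₀ (by norm_num) h

lemma smul_cubeQ (n : ℕ) (lam : ℝ) (s : ℕ) :
    (2:ℝ) • cubeQ n lam s = cubeQ n lam (s + 1) := by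
  ext x
  rw [mem_smul_set_iff_inv_smul_mem₀ two_ne_zero]
  simp only [cubeQ, mem_setOf_eq, PiLp.smul_apply, smul_eq_mul]
  refine forall_congr' fun i => ?_
  rw [abs_mul, abs_inv, abs_two, pow_succ]
  constructor <;> intro h <;> nlinarith [abs_nonneg (x i)]

lemma cubeQ_norm_lower (n : ℕ) (lam : ℝ) (s : ℕ) {x : EuclideanSpace ℝ (Fin n)}
    (hx : x ∉ cubeQ n lam s) : 2 ^ s * lam ≤ ‖x‖ := by
  simp only [cubeQ, mem_setOf_eq, not_forall, not_le] at hx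
  obtain ⟨i, hi⟩ := hx
  refine hi.le.trans ?_
  rw [EuclideanSpace.norm_eq]
  calc |x i| = Real.sqrt (‖x i‖ ^ 2) := by rw [Real.norm_eq_abs, Real.sqrt_sq_eq_abs, abs_abs]
    _ ≤ _ := Real.sqrt_le_sqrt
        (Finset.single_le_sum (fun j _ => sq_nonneg ‖x j‖) (Finset.mem_univ i))

lemma cubeQ_norm_upper (n : ℕ) (lam : ℝ) (s : ℕ) {x : EuclideanSpace ℝ (Fin n)}
    (hx : x ∈ cubeQ n lam s) (hpos : 0 ≤ 2 ^ s * lam) :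
    ‖x‖ ≤ Real.sqrt n * (2 ^ s * lam) := by
  rw [EuclideanSpace.norm_eq]
  have h1 : ∑ i, ‖x i‖ ^ 2 ≤ (n : ℝ) * (2 ^ s * lam) ^ 2 := by
    calc ∑ i, ‖x i‖ ^ 2 ≤ ∑ _i : Fin n, (2 ^ s * lam) ^ 2 :=
          Finset.sum_le_sum fun i _ => by
            rw [Real.norm_eq_abs]
            exact pow_le_pow_left₀ (abs_nonneg _) (hx i) 2
      _ = (n : ℝ) * (2 ^ s * lam) ^ 2 := by
          simp [Finset.sum_const, Finset.card_univ, nsmul_eq_mul]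
  calc Real.sqrt (∑ i, ‖x i‖ ^ 2) ≤ Real.sqrt ((n : ℝ) * (2 ^ s * lam) ^ 2) :=
        Real.sqrt_le_sqrt h1
    _ = Real.sqrt n * (2 ^ s * lam) := by
        rw [Real.sqrt_mul (Nat.cast_nonneg n), Real.sqrt_sq hpos]

lemma nuMeas_eq_rpow_integral (n : ℕ) {β : ℝ} (hβ : 0 ≤ β)
    {T : Set (EuclideanSpace ℝ (Fin n))} (hT : MeasurableSet T) (hT1 : ∀ x ∈ T, 1 ≤ ‖x‖) :
    nuMeas n β T = ∫⁻ x in T, ENNReal.ofReal (‖x‖ ^ (-β)) ∂volume := by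
  rw [nuMeas, withDensity_apply _ hT]
  refine setLIntegral_congr_fun hT (fun x hx => ?_)
  rw [min_eq_right (Real.rpow_le_one_of_one_le_of_nonpos (hT1 x hx) (neg_nonpos.2 hβ))]

lemma nuMeas_smul (n : ℕ) {β : ℝ} (hβ : 0 ≤ β) {S : Set (EuclideanSpace ℝ (Fin n))}
    (hS : MeasurableSet S) (hS1 : ∀ x ∈ S, 1 ≤ ‖x‖) :
    nuMeas n β ((2:ℝ) • S)
      = ENNReal.ofReal ((2:ℝ) ^ n) * ENNReal.ofReal ((2:ℝ) ^ (-β)) * nuMeas n β S := by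
  have hm2 : MeasurableSet ((2:ℝ) • S) := hS.const_smul₀ (2:ℝ)
  have h2S1 : ∀ x ∈ (2:ℝ) • S, 1 ≤ ‖x‖ := by
    rintro x ⟨y, hy, rfl⟩
    rw [norm_smul, Real.norm_ofNat]
    nlinarith [hS1 y hy, norm_nonneg y]
  rw [nuMeas_eq_rpow_integral n hβ hm2 h2S1, nuMeas_eq_rpow_integral n hβ hS hS1]
  have hg : Measurable fun x : EuclideanSpace ℝ (Fin n) => ENNReal.ofReal (‖x‖ ^ (-β)) := by
    fun_prop
  have hgi : Measurable (((2:ℝ) • S).indicator fun x => ENNReal.ofReal (‖x‖ ^ (-β))) :=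
    hg.indicator hm2
  have key := lintegral_map (μ := volume) hgi
    (measurable_const_smul (2:ℝ) (α := EuclideanSpace ℝ (Fin n)))
  rw [Measure.map_addHaar_smul volume two_ne_zero, lintegral_smul_measure] at key
  have hcomp : ∀ x : EuclideanSpace ℝ (Fin n),
      (((2:ℝ) • S).indicator fun x => ENNReal.ofReal (‖x‖ ^ (-β))) ((2:ℝ) • x)
        = S.indicator (fun x => ENNReal.ofReal ((2:ℝ) ^ (-β)) * ENNReal.ofReal (‖x‖ ^ (-β))) x := by
    intro x
    by_cases hx : x ∈ S
    · rw [indicator_of_mem ((smul_mem_smul_set_iff₀ two_ne_zero S x).2 hx), indicator_of_mem hx,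
        ← ENNReal.ofReal_mul (by positivity)]
      congr 1
      rw [norm_smul, Real.norm_ofNat, Real.mul_rpow (by norm_num) (norm_nonneg x)]
    · rw [indicator_of_notMem (fun h => hx ((smul_mem_smul_set_iff₀ two_ne_zero S x).1 h)),
        indicator_of_notMem hx]
  simp only [hcomp] at key
  rw [lintegral_indicator hS, lintegral_const_mul _ hg, lintegral_indicator hm2] at key
  rw [finrank_euclideanSpace, Fintype.card_fin] at key
  have h1 : ENNReal.ofReal ((2:ℝ) ^ n) * ENNReal.ofReal |((2:ℝ) ^ n)⁻¹| = 1 := by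
    rw [← ENNReal.ofReal_mul (by positivity), abs_of_nonneg (by positivity),
      mul_inv_cancel₀ (by positivity), ENNReal.ofReal_one]
  calc ∫⁻ x in ((2:ℝ) • S), ENNReal.ofReal (‖x‖ ^ (-β)) ∂volume
      = (ENNReal.ofReal ((2:ℝ) ^ n) * ENNReal.ofReal |((2:ℝ) ^ n)⁻¹|)
          * ∫⁻ x in ((2:ℝ) • S), ENNReal.ofReal (‖x‖ ^ (-β)) ∂volume := by rw [h1, one_mul]
    _ = ENNReal.ofReal ((2:ℝ) ^ n) * (ENNReal.ofReal |((2:ℝ) ^ n)⁻¹|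
          * ∫⁻ x in ((2:ℝ) • S), ENNReal.ofReal (‖x‖ ^ (-β)) ∂volume) := by ring
    _ = _ := by rw [smul_eq_mul] at key; rw [key, ← mul_assoc]

/-- There is an absolute constant `C > 0` such that for all `n ≥ 1`,
`β ≥ C n^{3/2}`, `λ ≥ 1` and `s ≥ 1`:
`ν_β(Q_{2s} ∖ Q_{2s-1}) < (1/2) ν_β(Q_{2s} ∖ Q_{2s-2})`, i.e. `ν_β(A_s ∩ B_s) < ν_β(A_s)/2`. -/
theorem statement14 :
    ∃ C : ℝ, 0 < C ∧ ∀ n : ℕ, 1 ≤ n → ∀ β : ℝ, C * (n : ℝ) ^ ((3 : ℝ) / 2) ≤ β →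
      ∀ lam : ℝ, 1 ≤ lam → ∀ s : ℕ, 1 ≤ s →
        nuMeas n β (cubeQ n lam (2 * s) \ cubeQ n lam (2 * s - 1))
          < (1 / 2) * nuMeas n β (cubeQ n lam (2 * s) \ cubeQ n lam (2 * s - 2)) := by
  refine ⟨3, by norm_num, ?_⟩
  intro n hn β hβ lam hlam s hs
  obtain ⟨t, rfl⟩ : ∃ t, s = t + 1 := ⟨s - 1, by omega⟩
  have e1 : 2 * (t + 1) - 1 = 2 * t + 1 := by omega
  have e2 : 2 * (t + 1) - 2 = 2 * t := by omega
  have e3 : 2 * (t + 1) = 2 * t + 1 + 1 := by omega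
  rw [e1, e2, e3]
  haveI : Nonempty (Fin n) := ⟨⟨0, by omega⟩⟩
  have hlam0 : (0:ℝ) ≤ lam := by linarith
  have hn1 : (1:ℝ) ≤ (n : ℝ) := by exact_mod_cast hn
  have hβ2 : (n : ℝ) + 2 ≤ β := by
    have h32 : (n : ℝ) ≤ (n : ℝ) ^ ((3:ℝ) / 2) := by
      calc (n : ℝ) = (n : ℝ) ^ (1:ℝ) := (Real.rpow_one _).symm
        _ ≤ _ := Real.rpow_le_rpow_of_exponent_le hn1 (by norm_num)
    nlinarith
  have hβ0 : 0 ≤ β := by nlinarith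
  set Q0 := cubeQ n lam (2 * t) with hQ0
  set Q1 := cubeQ n lam (2 * t + 1) with hQ1
  set Q2 := cubeQ n lam (2 * t + 1 + 1) with hQ2
  have hmQ : ∀ m, MeasurableSet (cubeQ n lam m) := cubeQ_measurableSet n lam
  have hpow_lam : ∀ m : ℕ, (1:ℝ) ≤ 2 ^ m * lam := by
    intro m
    have h2 : (1:ℝ) ≤ 2 ^ m := one_le_pow₀ (by norm_num)
    nlinarith
  have hone : ∀ m, ∀ x ∈ cubeQ n lam (m + 1) \ cubeQ n lam m, 1 ≤ ‖x‖ := by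
    intro m x hx
    exact (hpow_lam m).trans (cubeQ_norm_lower n lam m hx.2)
  set S1 := Q1 \ Q0 with hS1def
  set S2 := Q2 \ Q1 with hS2def
  have hmS1 : MeasurableSet S1 := (hmQ _).diff (hmQ _)
  have hS2eq : S2 = (2:ℝ) • S1 := by
    rw [hS1def, hS2def, hQ0, hQ1, hQ2, smul_set_sdiff₀ two_ne_zero, smul_cubeQ, smul_cubeQ]
  have key : nuMeas n β S2
      = ENNReal.ofReal ((2:ℝ) ^ n) * ENNReal.ofReal ((2:ℝ) ^ (-β)) * nuMeas n β S1 := by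
    rw [hS2eq]; exact nuMeas_smul n hβ0 hmS1 (hone (2 * t))
  -- finiteness
  have hfin : nuMeas n β S1 ≠ ⊤ := by
    have hle : nuMeas n β S1 ≤ volume Q1 := by
      calc nuMeas n β S1 ≤ nuMeas n β Q1 := measure_mono diff_subset
        _ = ∫⁻ x in Q1, ENNReal.ofReal (min 1 (‖x‖ ^ (-β))) ∂volume :=
            withDensity_apply _ (hmQ _)
        _ ≤ ∫⁻ _x in Q1, 1 ∂volume :=
            lintegral_mono fun x => ENNReal.ofReal_le_one.2 (min_le_left _ _)
        _ = volume Q1 := setLIntegral_one _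
    have hball : volume Q1 < ⊤ := by
      refine lt_of_le_of_lt (measure_mono fun x hx => ?_)
        (measure_closedBall_lt_top (x := (0 : EuclideanSpace ℝ (Fin n)))
          (r := Real.sqrt n * (2 ^ (2 * t + 1) * lam)))
      exact mem_closedBall_zero_iff.2
        (cubeQ_norm_upper n lam (2 * t + 1) hx (by linarith [hpow_lam (2 * t + 1)]))
    exact ne_of_lt (lt_of_le_of_lt hle hball)
  -- positivity
  have hpos : nuMeas n β S1 ≠ 0 := by
    set R : ℝ := Real.sqrt n * (2 ^ (2 * t + 1) * lam) with hR
    have hRpos : 0 < R := by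
      have : (0:ℝ) < Real.sqrt n := Real.sqrt_pos.2 (by positivity)
      nlinarith [hpow_lam (2 * t + 1)]
    set U : Set (EuclideanSpace ℝ (Fin n)) :=
      {x | ∀ i, x i ∈ Ioo (2 ^ (2 * t) * lam) (2 ^ (2 * t + 1) * lam)} with hU
    have hUopen : IsOpen U := by
      have : U = ⋂ i, (fun x : EuclideanSpace ℝ (Fin n) => x i) ⁻¹'
          Ioo (2 ^ (2 * t) * lam) (2 ^ (2 * t + 1) * lam) := by
        ext x; simp [hU]
      rw [this]
      exact isOpen_iInter_of_finite fun i =>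
        IsOpen.preimage (by fun_prop) isOpen_Ioo
    have hUne : U.Nonempty := by
      refine ⟨(WithLp.equiv 2 (Fin n → ℝ)).symm
        (fun _ => (2 ^ (2 * t) * lam + 2 ^ (2 * t + 1) * lam) / 2), fun i => ?_⟩
      have h12 : (2:ℝ) ^ (2 * t) * lam < 2 ^ (2 * t + 1) * lam := by
        rw [pow_succ]
        nlinarith [hpow_lam (2 * t)]
      constructor <;> · simp only [WithLp.equiv_symm_apply, PiLp.toLp_apply]
                        linarith
    have hUsub : U ⊆ S1 := by
      intro x hx
      constructor
      · intro i
        have h := hx i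
        rw [abs_le]
        constructor <;> nlinarith [hpow_lam (2 * t), h.1, h.2]
      · intro hmem
        obtain ⟨i⟩ := (inferInstance : Nonempty (Fin n))
        have h := hx i
        have := hmem i
        have habs : x i ≤ |x i| := le_abs_self _
        linarith [h.1]
    have hlow : ENNReal.ofReal (R ^ (-β)) * volume U ≤ nuMeas n β S1 := by
      rw [nuMeas, withDensity_apply _ hmS1]
      calc ENNReal.ofReal (R ^ (-β)) * volume U
          = ∫⁻ _x in U, ENNReal.ofReal (R ^ (-β)) ∂volume := (setLIntegral_const _ _).symm
        _ ≤ ∫⁻ x in U, ENNReal.ofReal (min 1 (‖x‖ ^ (-β))) ∂volume := by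
            refine setLIntegral_mono (by fun_prop) fun x hx => ?_
            have hx1 : 1 ≤ ‖x‖ :=
              (hpow_lam (2 * t)).trans (cubeQ_norm_lower n lam (2 * t) (hUsub hx).2)
            have hxR : ‖x‖ ≤ R :=
              cubeQ_norm_upper n lam (2 * t + 1) (hUsub hx).1 (by linarith [hpow_lam (2 * t + 1)])
            have hmin : min 1 (‖x‖ ^ (-β)) = ‖x‖ ^ (-β) :=
              min_eq_right (Real.rpow_le_one_of_one_le_of_nonpos hx1 (neg_nonpos.2 hβ0))
            rw [hmin]
            exact ENNReal.ofReal_le_ofReal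
              (Real.rpow_le_rpow_of_nonpos (by linarith) hxR (neg_nonpos.2 hβ0))
        _ ≤ _ := lintegral_mono_set hUsub
    intro h0
    rw [h0, le_zero_iff, mul_eq_zero] at hlow
    rcases hlow with h | h
    · exact absurd h (by
        simp only [ENNReal.ofReal_eq_zero, not_le]
        exact Real.rpow_pos_of_pos hRpos _)
    · exact absurd h (ne_of_gt (hUopen.measure_pos volume hUne))
  -- decomposition
  have hdisj : Disjoint S2 S1 := disjoint_sdiff_left.mono_right diff_subset
  have hunion : S2 ∪ S1 = Q2 \ Q0 :=
    diff_union_diff_cancel (cubeQ_subset n hlam0 (by omega)) (cubeQ_subset n hlam0 (by omega))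
  have hsplit : nuMeas n β (Q2 \ Q0) = nuMeas n β S2 + nuMeas n β S1 := by
    rw [← hunion, measure_union hdisj hmS1]
  -- the scaling constant is at most 1/4
  have hk : ENNReal.ofReal ((2:ℝ) ^ n) * ENNReal.ofReal ((2:ℝ) ^ (-β)) ≤ 1 / 4 := by
    rw [← ENNReal.ofReal_mul (by positivity)]
    have hr : (2:ℝ) ^ n * 2 ^ (-β) ≤ 1 / 4 := by
      rw [← Real.rpow_natCast 2 n, ← Real.rpow_add (by norm_num)]
      calc (2:ℝ) ^ ((n : ℝ) + -β) ≤ 2 ^ (-2 : ℝ) :=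
            Real.rpow_le_rpow_of_exponent_le (by norm_num) (by linarith)
        _ = 1 / 4 := by
            rw [show (-2:ℝ) = ((-2 : ℤ) : ℝ) by norm_num, Real.rpow_intCast]
            norm_num
    calc ENNReal.ofReal ((2:ℝ) ^ n * 2 ^ (-β)) ≤ ENNReal.ofReal (1 / 4) :=
          ENNReal.ofReal_le_ofReal hr
      _ = 1 / 4 := by
          rw [ENNReal.ofReal_div_of_pos (by norm_num)]
          norm_num
  calc nuMeas n β S2 = ENNReal.ofReal ((2:ℝ) ^ n) * ENNReal.ofReal ((2:ℝ) ^ (-β))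
        * nuMeas n β S1 := key
    _ ≤ (1 / 4) * nuMeas n β S1 := mul_le_mul_left hk _
    _ < (1 / 2) * nuMeas n β S1 := by
        rw [ENNReal.mul_lt_mul_iff_left hpos hfin]
        norm_num
    _ ≤ (1 / 2) * nuMeas n β (Q2 \ Q0) := by
        rw [hsplit]
        exact mul_le_mul_right le_add_self _
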